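/- If a sequence of continuous compactly supported functions f_n : G → ℂ on a locally compact group G converges to f in the inductive limit topology (uniformly, with supports all contained in a fixed compact set), and closed subgroups H_n converge to H in the Chabauty–Fell topology, with Haar measures chosen continuously (normalized so that a fixed nonnegative f₀ ∈ C_c(G) with f₀(e) ≠ 0 integrates to 1 on each closed subgroup), then ∫_{H_n} f_n dμ_{H_n} → ∫_H f dμ_H. -/

import Mathlib

open MeasureTheory Filter Topology

set_option maxHeartbeats 1000000

/-- Lemma 1. Let `G` be a locally compact (second countable, Hausdorff) group. Let
`Hₙ → H` be closed subgroups converging in the Chabauty–Fell topology, with left Haar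
measures `μ n` on `Hₙ` and `ν` on `H` (realized as measures on `G` carried by the
subgroups, left-invariant under them), chosen "smoothly": normalized so that a fixed
nonnegative `f₀ ∈ C_c(G)` with `f₀(e) > 0` integrates to `1`, which makes
`H ↦ ∫_H g` continuous for every `g ∈ C_c(G)` — along the convergent sequence this
continuity reads `∫ g dμₙ → ∫ g dν` for all continuous compactly supported `g`.
If `fₙ ∈ C_c(G)` converge to `f` in the inductive limit topology (uniformly, with all
supports in a fixed compact set `K`), then `∫_{Hₙ} fₙ dμₙ → ∫_H f dν`. -/
theorem tendsto_integral_of_inductiveLimit_of_chabauty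
    {G : Type*} [TopologicalSpace G] [Group G] [IsTopologicalGroup G]
    [T2Space G] [LocallyCompactSpace G] [SecondCountableTopology G]
    [MeasurableSpace G] [BorelSpace G]
    (H : ℕ → Subgroup G) (Hlim : Subgroup G)
    (hHcl : ∀ n, IsClosed (H n : Set G)) (hHlimcl : IsClosed (Hlim : Set G))
    (μ : ℕ → Measure G) (ν : Measure G)
    [∀ n, IsFiniteMeasureOnCompacts (μ n)] [IsFiniteMeasureOnCompacts ν]
    (hμcarrier : ∀ n, μ n ((H n : Set G)ᶜ) = 0) (hνcarrier : ν ((Hlim : Set G)ᶜ) = 0)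
    (hμinv : ∀ n, ∀ h ∈ H n, ∀ E : Set G, MeasurableSet E →
      μ n ((fun g => h * g) ⁻¹' E) = μ n E)
    (hνinv : ∀ h ∈ Hlim, ∀ E : Set G, MeasurableSet E →
      ν ((fun g => h * g) ⁻¹' E) = ν E)
    (f₀ : G → ℝ) (hf₀c : Continuous f₀) (hf₀supp : HasCompactSupport f₀)
    (hf₀nonneg : ∀ g, 0 ≤ f₀ g) (hf₀e : 0 < f₀ 1)
    (hnorm : ∀ n, ∫ x, f₀ x ∂(μ n) = 1) (hnormlim : ∫ x, f₀ x ∂ν = 1)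
    (hsmooth : ∀ g : G → ℂ, Continuous g → HasCompactSupport g →
      Tendsto (fun n => ∫ x, g x ∂(μ n)) atTop (𝓝 (∫ x, g x ∂ν)))
    (f : ℕ → G → ℂ) (flim : G → ℂ)
    (hfc : ∀ n, Continuous (f n)) (hflimc : Continuous flim)
    (K : Set G) (hK : IsCompact K)
    (hsupp : ∀ n, tsupport (f n) ⊆ K) (hsupplim : tsupport flim ⊆ K)
    (hunif : TendstoUniformly f flim atTop) :
    Tendsto (fun n => ∫ x, f n x ∂(μ n)) atTop (𝓝 (∫ x, flim x ∂ν)) := by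

  -- Urysohn bump function equal to 1 on K
  obtain ⟨g, hgK, -, hgsupp, hg01⟩ :=
    exists_continuous_one_zero_of_isCompact hK isClosed_empty (Set.disjoint_empty K)
  have hgc : Continuous g := g.continuous
  have hgnonneg : ∀ x, 0 ≤ g x := fun x => (hg01 x).1
  -- compact supports
  have hflimsupp : HasCompactSupport flim := hK.of_isClosed_subset (isClosed_tsupport _) hsupplim
  have hfsupp : ∀ n, HasCompactSupport (f n) :=
    fun n => hK.of_isClosed_subset (isClosed_tsupport _) (hsupp n)
  -- convergence of ∫ g dμₙ
  have hgC : Tendsto (fun n => ∫ x, (Complex.ofReal ∘ ⇑g) x ∂(μ n)) atTop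
      (𝓝 (∫ x, (Complex.ofReal ∘ ⇑g) x ∂ν)) :=
    hsmooth _ (Complex.continuous_ofReal.comp hgc) (hgsupp.comp_left rfl)
  have key : ∀ m : Measure G, ∫ x, ((g x : ℝ) : ℂ) ∂m = ((∫ x, g x ∂m : ℝ) : ℂ) :=
    fun m => integral_ofReal
  have hgR : Tendsto (fun n => ∫ x, g x ∂(μ n)) atTop (𝓝 (∫ x, g x ∂ν)) := by
    have := (Complex.continuous_re.tendsto _).comp hgC
    simpa [Function.comp_def, key] using this
  set L := ∫ x, g x ∂ν with hL
  have hLnonneg : 0 ≤ L := integral_nonneg hgnonneg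
  have hbig : ∀ᶠ n in atTop, ∫ x, g x ∂(μ n) ≤ L + 1 := by
    filter_upwards [hgR.eventually (eventually_le_nhds (lt_add_one L))] with n hn using hn
  -- main limit for flim
  have h1 : Tendsto (fun n => ∫ x, flim x ∂(μ n)) atTop (𝓝 (∫ x, flim x ∂ν)) :=
    hsmooth flim hflimc hflimsupp
  -- difference tends to 0
  have h2 : Tendsto (fun n => (∫ x, f n x ∂(μ n)) - ∫ x, flim x ∂(μ n)) atTop (𝓝 0) := by
    rw [NormedAddCommGroup.tendsto_nhds_zero]
    intro ε hε
    have hC : (0:ℝ) < L + 1 := by linarith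
    have hδ : (0:ℝ) < ε / (2 * (L + 1)) := div_pos hε (by linarith)
    filter_upwards [hbig, Metric.tendstoUniformly_iff.mp hunif _ hδ] with n hn hdist
    have hint1 : Integrable (f n) (μ n) := (hfc n).integrable_of_hasCompactSupport (hfsupp n)
    have hint2 : Integrable flim (μ n) := hflimc.integrable_of_hasCompactSupport hflimsupp
    have hintg : Integrable g (μ n) := hgc.integrable_of_hasCompactSupport hgsupp
    rw [← integral_sub hint1 hint2]
    calc ‖∫ x, (f n x - flim x) ∂(μ n)‖
        ≤ ∫ x, ‖f n x - flim x‖ ∂(μ n) := norm_integral_le_integral_norm _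
      _ ≤ ∫ x, (ε / (2 * (L + 1))) * g x ∂(μ n) := by
          apply integral_mono ((hint1.sub hint2).norm) (hintg.const_mul _)
          intro x
          simp only [Pi.sub_apply]
          by_cases hx : x ∈ K
          · have : g x = 1 := hgK hx
            rw [this, mul_one]
            have := hdist x
            rw [dist_comm, dist_eq_norm] at this
            exact this.le
          · have h1x : f n x = 0 := image_eq_zero_of_notMem_tsupport (fun h => hx (hsupp n h))
            have h2x : flim x = 0 := image_eq_zero_of_notMem_tsupport (fun h => hx (hsupplim h))
            simp only [h1x, h2x, sub_zero, norm_zero]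
            exact mul_nonneg hδ.le (hgnonneg x)
      _ = (ε / (2 * (L + 1))) * ∫ x, g x ∂(μ n) := integral_const_mul _ _
      _ ≤ (ε / (2 * (L + 1))) * (L + 1) := mul_le_mul_of_nonneg_left hn hδ.le
      _ < ε := by
          rw [div_mul_eq_mul_div, mul_comm]
          rw [div_lt_iff₀ (by linarith : (0:ℝ) < 2 * (L + 1))]
          nlinarith
  have := h2.add h1
  simp only [zero_add] at this
  convert this using 2 with n
  ring
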